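/- At the critical parameter value ρ = ρ* = (33√33 − 115)/668, the point x₋ = (9 − √33)/24 is a fixed point of f_{ρ*}, i.e. f_{ρ*}(x₋) = x₋, and moreover f_{ρ*}′(x₋) = 1; that is, x₋ is a degenerate (saddle-node) fixed point of the map at ρ = ρ*. -/

import Mathlib

/-- The one-parameter family of polynomial maps `f_ρ`. -/
noncomputable def fmap (ρ x : ℝ) : ℝ :=
  (ρ - 1) * (8 * x ^ 3 - 9 * x ^ 2) + 2 * ρ * x - x + ρ

/-- The critical parameter value of the saddle-node bifurcation. -/
noncomputable def ρstar : ℝ := (33 * Real.sqrt 33 - 115) / 668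

/-- The bifurcation point in state space. -/
noncomputable def xminus : ℝ := (9 - Real.sqrt 33) / 24

lemma fmap_deriv (ρ x : ℝ) :
    deriv (fmap ρ) x = (ρ - 1) * (24 * x ^ 2 - 18 * x) + 2 * ρ - 1 := by
  have h : HasDerivAt (fmap ρ) ((ρ - 1) * (24 * x ^ 2 - 18 * x) + 2 * ρ - 1) x := by
    unfold fmap
    have h1 := ((((((hasDerivAt_pow 3 x).const_mul 8).sub
        ((hasDerivAt_pow 2 x).const_mul 9)).const_mul (ρ - 1)).add
        ((hasDerivAt_id x).const_mul (2 * ρ))).sub (hasDerivAt_id x)).add_const ρ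
    simp only [id] at h1
    refine h1.congr_deriv ?_
    push_cast
    ring
  exact h.deriv

theorem stmt_6 : fmap ρstar xminus = xminus ∧ deriv (fmap ρstar) xminus = 1 := by
  have hs : Real.sqrt 33 ^ 2 = 33 := Real.sq_sqrt (by norm_num)
  constructor
  · unfold fmap ρstar xminus
    nlinarith [hs, Real.sqrt_nonneg 33, sq_nonneg (Real.sqrt 33)]
  · rw [fmap_deriv]
    unfold ρstar xminus
    nlinarith [hs, Real.sqrt_nonneg 33]
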